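/- Let Φ be a real n×m matrix with full column rank whose columns φ_1,…,φ_m each have unit Euclidean norm, let x ∈ ℝ^m be k-sparse with support S, let ε ∈ ℝⁿ, and let y = Φx + ε. If (σ_min(Φ) / √(2(2 − σ_min(Φ)²))) · min_{i∈S} |x_i| > ‖ε‖₂, where σ_min(Φ) is the smallest singular value of Φ, then Backward Regression, started from the full active set {1,…,m} and run for m − k iterations on (Φ, y), terminates with active set exactly S, for every choice of tie-breaking. -/

import Mathlib

/-- The least-squares residual `r_A = y − P_A y`, where `P_A` is the orthogonal projection
onto `span{φ_j : j ∈ A}`. -/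
noncomputable def lsResidual {n m : ℕ} (φ : Fin m → EuclideanSpace ℝ (Fin n))
    (y : EuclideanSpace ℝ (Fin n)) (A : Finset (Fin m)) : EuclideanSpace ℝ (Fin n) :=
  y - (Submodule.orthogonalProjectionOnto (Submodule.span ℝ (φ '' (A : Set (Fin m)))) y :
    EuclideanSpace ℝ (Fin n))

/-- One step of Backward Regression: delete an active index minimizing `‖r_{A∖{i}}‖`
(any tie-breaking). -/
def BRStep {n m : ℕ} (φ : Fin m → EuclideanSpace ℝ (Fin n))
    (y : EuclideanSpace ℝ (Fin n)) (A B : Finset (Fin m)) : Prop :=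
  ∃ i ∈ A, B = A.erase i ∧
    ∀ j ∈ A, ‖lsResidual φ y (A.erase i)‖ ≤ ‖lsResidual φ y (A.erase j)‖

/-- The smallest singular value of the matrix with columns `φ j`,
`σ_min = inf {‖Σ_j v_j φ_j‖ : ‖v‖₂ = 1}`. -/
noncomputable def sigmaMin {n : ℕ} {ι : Type*} [Fintype ι]
    (φ : ι → EuclideanSpace ℝ (Fin n)) : ℝ :=
  sInf {t : ℝ | ∃ v : EuclideanSpace ℝ ι, ‖v‖ = 1 ∧ t = ‖∑ j, v j • φ j‖}

set_option maxHeartbeats 1000000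

namespace BRaux
open Finset Submodule
local notation "⟪" x ", " y "⟫" => @inner ℝ _ _ x y

variable {n m : ℕ} (φ : Fin m → EuclideanSpace ℝ (Fin n))



lemma sigmaMin_nonneg : 0 ≤ sigmaMin φ :=
  Real.sInf_nonneg (by rintro t ⟨v, -, rfl⟩; positivity)

lemma sigmaMin_mul_norm_le (w : EuclideanSpace ℝ (Fin m)) :
    sigmaMin φ * ‖w‖ ≤ ‖∑ j, w j • φ j‖ := by
  rcases eq_or_ne w 0 with rfl | hw
  · simp
  have hnw : (0:ℝ) < ‖w‖ := norm_pos_iff.2 hw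
  have hmem : ‖∑ j, (‖w‖⁻¹ • w) j • φ j‖ ∈
      {t : ℝ | ∃ v : EuclideanSpace ℝ (Fin m), ‖v‖ = 1 ∧ t = ‖∑ j, v j • φ j‖} :=
    ⟨‖w‖⁻¹ • w, by simp [norm_smul, abs_of_pos (inv_pos.2 hnw), inv_mul_cancel₀ hnw.ne'], rfl⟩
  have hbdd : BddBelow {t : ℝ | ∃ v : EuclideanSpace ℝ (Fin m), ‖v‖ = 1 ∧ t = ‖∑ j, v j • φ j‖} :=
    ⟨0, by rintro t ⟨v, -, rfl⟩; positivity⟩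
  have h1 : sigmaMin φ ≤ ‖∑ j, (‖w‖⁻¹ • w) j • φ j‖ := csInf_le hbdd hmem
  have h2 : ‖∑ j, (‖w‖⁻¹ • w) j • φ j‖ = ‖w‖⁻¹ * ‖∑ j, w j • φ j‖ := by
    rw [← Real.norm_of_nonneg (inv_nonneg.2 hnw.le), ← norm_smul, Finset.smul_sum]
    congr 1; apply Finset.sum_congr rfl; intro j _
    simp [smul_smul]
  rw [h2] at h1
  calc sigmaMin φ * ‖w‖ ≤ (‖w‖⁻¹ * ‖∑ j, w j • φ j‖) * ‖w‖ := by
        exact mul_le_mul_of_nonneg_right h1 hnw.le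
    _ = ‖∑ j, w j • φ j‖ := by field_simp

lemma single_sum (i : Fin m) (c : ℝ) :
    ∑ j, (EuclideanSpace.single i c : EuclideanSpace ℝ (Fin m)) j • φ j = c • φ i := by
  rw [Finset.sum_eq_single i]
  · simp
  · intro b _ hb; simp [EuclideanSpace.single_apply, hb]
  · simp

lemma sigmaMin_le_one (hunit : ∀ j, ‖φ j‖ = 1) (i : Fin m) : sigmaMin φ ≤ 1 := by
  have hbdd : BddBelow {t : ℝ | ∃ v : EuclideanSpace ℝ (Fin m), ‖v‖ = 1 ∧ t = ‖∑ j, v j • φ j‖} :=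
    ⟨0, by rintro t ⟨v, -, rfl⟩; positivity⟩
  have hmem : (1:ℝ) ∈ {t : ℝ | ∃ v : EuclideanSpace ℝ (Fin m), ‖v‖ = 1 ∧ t = ‖∑ j, v j • φ j‖} := by
    refine ⟨EuclideanSpace.single i 1, by simp, ?_⟩
    rw [single_sum]; simp [hunit i]
  exact csInf_le hbdd hmem

/-- key lower bound: distance from a combination to spans -/
lemma sigma_dist_le (w : EuclideanSpace ℝ (Fin m)) (B : Finset (Fin m))
    (hg : ∀ l ∈ B, w l = 0) {z : EuclideanSpace ℝ (Fin n)}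
    (hz : z ∈ Submodule.span ℝ (φ '' (B : Set (Fin m)))) :
    sigmaMin φ * ‖w‖ ≤ ‖(∑ l, w l • φ l) - z‖ := by
  obtain ⟨l, hl, rfl⟩ := (Finsupp.mem_span_image_iff_linearCombination ℝ).1 hz
  set w' : EuclideanSpace ℝ (Fin m) := w - (WithLp.equiv 2 (Fin m → ℝ)).symm (l : Fin m → ℝ) with hw'
  have hsum : ∑ j, w' j • φ j = (∑ j, w j • φ j) - Finsupp.linearCombination ℝ φ l := by
    rw [Finsupp.linearCombination_apply, Finsupp.sum_fintype _ _ (by simp)]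
    rw [← Finset.sum_sub_distrib]
    apply Finset.sum_congr rfl; intro j _
    simp [hw', sub_smul]
  have hnorm : ‖w‖ ≤ ‖w'‖ := by
    rw [EuclideanSpace.norm_eq, EuclideanSpace.norm_eq]
    apply Real.sqrt_le_sqrt
    apply Finset.sum_le_sum
    intro j _
    rcases eq_or_ne (w j) 0 with h0 | h0
    · simp [h0]
      positivity
    · have hjB : j ∉ B := fun hj => h0 (hg j hj)
      have : l j = 0 := by
        have := Finsupp.mem_supported ℝ l |>.1 hl
        by_contra hlj
        exact hjB (this (Finsupp.mem_support_iff.2 hlj))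
      simp [hw', this]
  calc sigmaMin φ * ‖w‖ ≤ sigmaMin φ * ‖w'‖ :=
        mul_le_mul_of_nonneg_left hnorm (sigmaMin_nonneg φ)
    _ ≤ ‖∑ j, w' j • φ j‖ := sigmaMin_mul_norm_le φ w'
    _ = _ := by rw [hsum]



noncomputable def sp (φ : Fin m → EuclideanSpace ℝ (Fin n)) (B : Finset (Fin m)) :
    Submodule ℝ (EuclideanSpace ℝ (Fin n)) :=
  Submodule.span ℝ (φ '' (B : Set (Fin m)))

lemma mem_sp {B : Finset (Fin m)} {i : Fin m} (hi : i ∈ B) : φ i ∈ sp φ B :=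
  Submodule.subset_span (Set.mem_image_of_mem φ (by exact_mod_cast hi))

lemma sp_mono {B C : Finset (Fin m)} (h : B ⊆ C) : sp φ B ≤ sp φ C :=
  Submodule.span_mono (Set.image_mono (by exact_mod_cast h))

/-- the gap vector `φ i - P_{A∖i} φ i`. -/
noncomputable def uVec (A : Finset (Fin m)) (i : Fin m) : EuclideanSpace ℝ (Fin n) :=
  φ i - (orthogonalProjection (sp φ (A.erase i)) (φ i) : EuclideanSpace ℝ (Fin n))

noncomputable def uhat (A : Finset (Fin m)) (i : Fin m) : EuclideanSpace ℝ (Fin n) :=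
  ‖uVec φ A i‖⁻¹ • uVec φ A i

lemma uVec_orth (A : Finset (Fin m)) (i : Fin m) :
    ∀ w ∈ sp φ (A.erase i), ⟪uVec φ A i, w⟫ = 0 :=
  starProjection_inner_eq_zero (K := sp φ (A.erase i)) (φ i)

lemma uhat_orth (A : Finset (Fin m)) (i : Fin m) :
    ∀ w ∈ sp φ (A.erase i), ⟪uhat φ A i, w⟫ = 0 := by
  intro w hw
  rw [uhat, inner_smul_left]
  simp [uVec_orth φ A i w hw]

lemma sigma_le_norm_uVec (A : Finset (Fin m)) (i : Fin m) :
    sigmaMin φ ≤ ‖uVec φ A i‖ := by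
  have h := sigma_dist_le φ (EuclideanSpace.single i 1) (A.erase i)
    (fun l hl => by simp [EuclideanSpace.single_apply, Finset.ne_of_mem_erase hl])
    (SetLike.coe_mem (orthogonalProjection (sp φ (A.erase i)) (φ i)))
  rwa [single_sum, EuclideanSpace.norm_single, norm_one, mul_one, one_smul] at h

lemma uVec_mem (A : Finset (Fin m)) {i : Fin m} (hi : i ∈ A) : uVec φ A i ∈ sp φ A :=
  Submodule.sub_mem _ (mem_sp φ hi)
    (sp_mono φ (Finset.erase_subset _ _) (SetLike.coe_mem _))

lemma uhat_mem (A : Finset (Fin m)) {i : Fin m} (hi : i ∈ A) : uhat φ A i ∈ sp φ A :=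
  Submodule.smul_mem _ _ (uVec_mem φ A hi)

lemma proj_formula (y : EuclideanSpace ℝ (Fin n)) (A : Finset (Fin m)) {i : Fin m} (hi : i ∈ A)
    (hu : uVec φ A i ≠ 0) :
    (orthogonalProjection (sp φ A) y : EuclideanSpace ℝ (Fin n))
      = (orthogonalProjection (sp φ (A.erase i)) y : EuclideanSpace ℝ (Fin n))
        + ⟪y, uhat φ A i⟫ • uhat φ A i := by
  set B := A.erase i with hB
  set u := uVec φ A i with hudef
  set e1 := uhat φ A i with he1
  set c : ℝ := ⟪y, e1⟫ with hc
  set Pb : EuclideanSpace ℝ (Fin n) :=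
    (orthogonalProjection (sp φ B) y : EuclideanSpace ℝ (Fin n)) with hPb
  have hnu : ‖u‖ ≠ 0 := fun h => hu (norm_eq_zero.1 h)
  have hmain : ∀ w ∈ sp φ B, ⟪y - (Pb + c • e1), w⟫ = 0 := by
    intro w hw
    have h1 : ⟪y - Pb, w⟫ = 0 := starProjection_inner_eq_zero (K := sp φ B) y w hw
    have h2 : ⟪e1, w⟫ = 0 := uhat_orth φ A i w hw
    have : y - (Pb + c • e1) = (y - Pb) - c • e1 := by abel
    rw [this, inner_sub_left, h1, inner_smul_left, h2]
    simp
  apply eq_starProjection_of_mem_of_inner_eq_zero (K := sp φ A) (u := y)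
  · exact Submodule.add_mem _ (sp_mono φ (Finset.erase_subset _ _) (SetLike.coe_mem _))
      (Submodule.smul_mem _ _ (uhat_mem φ A hi))
  · intro w hw
    induction hw using Submodule.span_induction with
    | mem w hwmem =>
      obtain ⟨l, hl, rfl⟩ := hwmem
      have hlA : l ∈ A := by exact_mod_cast hl
      rcases eq_or_ne l i with rfl | hli
      · -- φ i = u + P_B (φ i)
        have hsplit : φ l = u + (orthogonalProjection (sp φ B) (φ l) :
            EuclideanSpace ℝ (Fin n)) := by rw [hudef, uVec]; abel
        rw [hsplit, inner_add_right,
          hmain _ (SetLike.coe_mem (orthogonalProjection (sp φ B) (φ l))), add_zero]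
        have hPbu : ⟪Pb, u⟫ = 0 := by
          rw [real_inner_comm]
          exact uVec_orth φ A l Pb (SetLike.coe_mem _)
        have he1u : ⟪e1, u⟫ = ‖u‖ := by
          rw [he1, uhat, inner_smul_left, real_inner_self_eq_norm_sq, ← hudef]
          simp only [conj_trivial]
          rw [pow_two, ← mul_assoc, inv_mul_cancel₀ hnu, one_mul]
        have hcval : c = ‖u‖⁻¹ * ⟪y, u⟫ := by
          rw [hc, he1, uhat, inner_smul_right]
        have : y - (Pb + c • e1) = (y - Pb) - c • e1 := by abel
        rw [this, inner_sub_left, inner_sub_left, hPbu, inner_smul_left, he1u, hcval]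
        simp only [conj_trivial]
        field_simp
        ring
      · exact hmain _ (mem_sp φ (Finset.mem_erase.2 ⟨hli, hlA⟩))
    | zero => simp
    | add w₁ w₂ _ _ h1 h2 => rw [inner_add_right, h1, h2, add_zero]
    | smul a w _ h1 => rw [inner_smul_right, h1, mul_zero]

lemma residual_sq_erase (y : EuclideanSpace ℝ (Fin n)) (A : Finset (Fin m)) {i : Fin m}
    (hi : i ∈ A) (hu : uVec φ A i ≠ 0) :
    ‖lsResidual φ y (A.erase i)‖ ^ 2
      = ‖lsResidual φ y A‖ ^ 2 + ⟪y, uhat φ A i⟫ ^ 2 := by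
  have hdecomp : lsResidual φ y (A.erase i)
      = lsResidual φ y A + ⟪y, uhat φ A i⟫ • uhat φ A i := by
    have e2 : lsResidual φ y (A.erase i) = y - (orthogonalProjection (sp φ (A.erase i)) y :
        EuclideanSpace ℝ (Fin n)) := rfl
    have e3 : lsResidual φ y A = y - (orthogonalProjection (sp φ A) y :
        EuclideanSpace ℝ (Fin n)) := rfl
    rw [e2, e3, proj_formula φ y A hi hu]
    abel
  have horth : ⟪lsResidual φ y A, ⟪y, uhat φ A i⟫ • uhat φ A i⟫ = 0 := by
    rw [inner_smul_right]
    have : ⟪lsResidual φ y A, uhat φ A i⟫ = 0 := by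
      have h := starProjection_inner_eq_zero (K := sp φ A) y (uhat φ A i) (uhat_mem φ A hi)
      exact h
    rw [this, mul_zero]
  rw [hdecomp, norm_add_sq_real, horth, mul_zero, add_zero, norm_smul]
  have h1 : ‖uhat φ A i‖ = 1 := norm_smul_inv_norm hu
  rw [h1, mul_one, Real.norm_eq_abs, sq_abs]

noncomputable def pVec (B : Finset (Fin m)) (i : Fin m) : EuclideanSpace ℝ (Fin n) :=
  φ i - (orthogonalProjection (sp φ B) (φ i) : EuclideanSpace ℝ (Fin n))

lemma pVec_orth (B : Finset (Fin m)) (i : Fin m) :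
    ∀ w ∈ sp φ B, ⟪pVec φ B i, w⟫ = 0 :=
  starProjection_inner_eq_zero (K := sp φ B) (φ i)

lemma uVec_eq_pVec (A : Finset (Fin m)) (i : Fin m) : uVec φ A i = pVec φ (A.erase i) i := rfl

lemma sigma_le_norm_pVec (B : Finset (Fin m)) {i : Fin m} (hi : i ∉ B) :
    sigmaMin φ ≤ ‖pVec φ B i‖ := by
  have h := sigma_dist_le φ (EuclideanSpace.single i 1) B
    (fun l hl => by
      have : l ≠ i := fun h => hi (h ▸ hl)
      simp [EuclideanSpace.single_apply, this])
    (SetLike.coe_mem (orthogonalProjection (sp φ B) (φ i)))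
  rwa [single_sum, EuclideanSpace.norm_single, norm_one, mul_one, one_smul] at h

lemma norm_pVec_le_one (hunit : ∀ j, ‖φ j‖ = 1) (B : Finset (Fin m)) (i : Fin m) :
    ‖pVec φ B i‖ ≤ 1 := by
  set P : EuclideanSpace ℝ (Fin n) := (orthogonalProjection (sp φ B) (φ i) :
    EuclideanSpace ℝ (Fin n)) with hP
  have horth : ⟪pVec φ B i, P⟫ = 0 := pVec_orth φ B i P (SetLike.coe_mem _)
  have hsplit : φ i = pVec φ B i + P := by rw [pVec]; abel
  have h1 : (1:ℝ) = ‖pVec φ B i‖^2 + ‖P‖^2 := by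
    have := norm_add_sq_real (pVec φ B i) P
    rw [← hsplit, hunit i, horth] at this
    linarith [this]
  nlinarith [norm_nonneg (pVec φ B i), norm_nonneg P, sq_nonneg (‖pVec φ B i‖ - 1)]

/-- the coherence-type bound `|⟨p,q⟩| ≤ (1 - σ²)‖p‖‖q‖`. -/
lemma inner_pVec_le (hunit : ∀ j, ‖φ j‖ = 1) (hσ : 0 < sigmaMin φ)
    (B : Finset (Fin m)) {i j : Fin m} (hij : i ≠ j) (hiB : i ∉ B) (hjB : j ∉ B) :
    |⟪pVec φ B i, pVec φ B j⟫| ≤ (1 - sigmaMin φ ^ 2) * (‖pVec φ B i‖ * ‖pVec φ B j‖) := by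
  set σ := sigmaMin φ with hσdef
  set p := pVec φ B i with hp
  set q := pVec φ B j with hq
  set a := ‖p‖ with hadef
  set b := ‖q‖ with hbdef
  set c : ℝ := ⟪p, q⟫ with hc
  have ha : σ ≤ a := sigma_le_norm_pVec φ B hiB
  have hb : σ ≤ b := sigma_le_norm_pVec φ B hjB
  have ha1 : a ≤ 1 := norm_pVec_le_one φ hunit B i
  have hb1 : b ≤ 1 := norm_pVec_le_one φ hunit B j
  set s : ℝ := if 0 ≤ c then 1 else -1 with hs
  have hsc : s * c = |c| := by
    rcases le_or_gt 0 c with h | h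
    · rw [hs, if_pos h, one_mul, abs_of_nonneg h]
    · rw [hs, if_neg (not_le.2 h), abs_of_neg h]; ring
  have hs2 : s ^ 2 = 1 := by
    rcases le_or_gt 0 c with h | h
    · rw [hs, if_pos h]; norm_num
    · rw [hs, if_neg (not_le.2 h)]; norm_num
  -- the test vector
  set w : EuclideanSpace ℝ (Fin m) :=
    EuclideanSpace.single i b - EuclideanSpace.single j (s * a) with hw
  have hwB : ∀ l ∈ B, w l = 0 := by
    intro l hl
    have hli : l ≠ i := fun h => hiB (h ▸ hl)
    have hlj : l ≠ j := fun h => hjB (h ▸ hl)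
    simp [hw, EuclideanSpace.single_apply, hli, hlj]
  set z : EuclideanSpace ℝ (Fin n) :=
    b • (orthogonalProjection (sp φ B) (φ i) : EuclideanSpace ℝ (Fin n))
      - (s * a) • (orthogonalProjection (sp φ B) (φ j) : EuclideanSpace ℝ (Fin n)) with hz
  have hzmem : z ∈ sp φ B :=
    Submodule.sub_mem _ (Submodule.smul_mem _ _ (SetLike.coe_mem _))
      (Submodule.smul_mem _ _ (SetLike.coe_mem _))
  have hsum : ∑ l, w l • φ l = b • φ i - (s * a) • φ j := by
    rw [hw]
    have : ∀ l, ((EuclideanSpace.single i b - EuclideanSpace.single j (s*a) :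
        EuclideanSpace ℝ (Fin m)) l) • φ l
        = (EuclideanSpace.single i b : EuclideanSpace ℝ (Fin m)) l • φ l
          - (EuclideanSpace.single j (s*a) : EuclideanSpace ℝ (Fin m)) l • φ l := by
      intro l
      have happ : (EuclideanSpace.single i b - EuclideanSpace.single j (s*a) :
          EuclideanSpace ℝ (Fin m)) l
          = (EuclideanSpace.single i b : EuclideanSpace ℝ (Fin m)) l
            - (EuclideanSpace.single j (s*a) : EuclideanSpace ℝ (Fin m)) l := rfl
      rw [happ, sub_smul]
    rw [Finset.sum_congr rfl (fun l _ => this l), Finset.sum_sub_distrib,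
      single_sum, single_sum]
  have hvv : (∑ l, w l • φ l) - z = b • p - (s * a) • q := by
    rw [hsum, hz, hp, hq, pVec, pVec, smul_sub, smul_sub]; abel
  have hkey := sigma_dist_le φ w B hwB hzmem
  rw [hvv] at hkey
  -- norm of w
  have hwnorm : ‖w‖ ^ 2 = b ^ 2 + (s * a) ^ 2 := by
    rw [← real_inner_self_eq_norm_sq, hw]
    rw [inner_sub_sub_self]
    rw [EuclideanSpace.inner_single_left, EuclideanSpace.inner_single_left,
      EuclideanSpace.inner_single_left]
    simp [EuclideanSpace.single_apply, hij, hij.symm]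
    ring_nf; rw [sq_abs, sq_abs]
  -- norm of the combination
  have hvnorm : ‖b • p - (s * a) • q‖ ^ 2 = 2 * a^2 * b^2 - 2 * (a * b) * |c| := by
    rw [norm_sub_sq_real, inner_smul_left, inner_smul_right, norm_smul, norm_smul]
    rw [mul_pow, mul_pow, Real.norm_eq_abs, Real.norm_eq_abs, sq_abs, sq_abs,
      ← hadef, ← hbdef, ← hc]
    simp only [conj_trivial]
    rw [← hsc]
    linear_combination (a^2*b^2) * hs2
  have hab : 0 < a * b := mul_pos (lt_of_lt_of_le hσ ha) (lt_of_lt_of_le hσ hb)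
  have hsq : σ ^ 2 * (b ^ 2 + (s*a) ^ 2) ≤ 2 * a^2 * b^2 - 2 * (a * b) * |c| := by
    have h0 : 0 ≤ σ * ‖w‖ := mul_nonneg hσ.le (norm_nonneg _)
    have := mul_self_le_mul_self h0 hkey
    calc σ ^ 2 * (b ^ 2 + (s*a) ^ 2) = (σ * ‖w‖) * (σ * ‖w‖) := by
          rw [show (σ * ‖w‖) * (σ * ‖w‖) = σ^2 * ‖w‖^2 by ring, hwnorm]
      _ ≤ ‖b • p - (s * a) • q‖ * ‖b • p - (s * a) • q‖ := this
      _ = 2 * a^2 * b^2 - 2 * (a * b) * |c| := by rw [← pow_two]; exact hvnorm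
  have hs2' : (s*a)^2 = a^2 := by rw [mul_pow, hs2, one_mul]
  rw [hs2'] at hsq
  -- conclude
  have hc1 : |c| ≤ a * b - σ ^ 2 := by
    nlinarith [hsq, mul_nonneg (sq_nonneg σ) (sq_nonneg (a - b)), hab]
  have hab1 : a * b ≤ 1 := mul_le_one₀ ha1 (le_trans hσ.le hb) hb1
  have h2 : a * b - σ ^ 2 ≤ (1 - σ ^ 2) * (a * b) := by
    nlinarith [mul_nonneg (sq_nonneg σ) (sub_nonneg.2 hab1)]
  linarith


lemma uVec_eq (A : Finset (Fin m)) {i j : Fin m} (hij : i ≠ j) (hi : i ∈ A) (hj : j ∈ A)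
    (hp : pVec φ ((A.erase i).erase j) i ≠ 0) :
    uVec φ A j = pVec φ ((A.erase i).erase j) j
      - (⟪pVec φ ((A.erase i).erase j) i, pVec φ ((A.erase i).erase j) j⟫
          / ‖pVec φ ((A.erase i).erase j) i‖ ^ 2) • pVec φ ((A.erase i).erase j) i := by
  set V := (A.erase i).erase j with hV
  set p := pVec φ ((A.erase i).erase j) i with hpdef
  set q := pVec φ ((A.erase i).erase j) j with hqdef
  set lam : ℝ := ⟪p, q⟫ / ‖p‖ ^ 2 with hlam
  have hnp : ‖p‖ ≠ 0 := fun h => hp (norm_eq_zero.1 h)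
  have hVsub : V ⊆ A.erase j := by
    rw [hV, Finset.erase_right_comm]
    exact Finset.erase_subset _ _
  have hiAj : i ∈ A.erase j := Finset.mem_erase.2 ⟨hij, hi⟩
  have hpmem : p ∈ sp φ (A.erase j) :=
    Submodule.sub_mem _ (mem_sp φ hiAj) (sp_mono φ hVsub (SetLike.coe_mem _))
  have hmain : ∀ w ∈ sp φ V, ⟪q - lam • p, w⟫ = 0 := by
    intro w hw
    rw [inner_sub_left, pVec_orth φ V j w hw, inner_smul_left,
      pVec_orth φ V i w hw]
    simp
  have hProj : (orthogonalProjection (sp φ (A.erase j)) (φ j) : EuclideanSpace ℝ (Fin n))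
      = (orthogonalProjection (sp φ V) (φ j) : EuclideanSpace ℝ (Fin n)) + lam • p := by
    apply eq_starProjection_of_mem_of_inner_eq_zero (K := sp φ (A.erase j)) (u := φ j)
    · exact Submodule.add_mem _ (sp_mono φ hVsub (SetLike.coe_mem _))
        (Submodule.smul_mem _ _ hpmem)
    · intro w hw
      have hqform : φ j - ((orthogonalProjection (sp φ V) (φ j) :
          EuclideanSpace ℝ (Fin n)) + lam • p) = q - lam • p := by
        rw [hqdef, pVec]; abel
      rw [hqform]
      induction hw using Submodule.span_induction with
      | mem w hwmem =>
        obtain ⟨l, hl, rfl⟩ := hwmem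
        have hlAj : l ∈ A.erase j := by exact_mod_cast hl
        rcases eq_or_ne l i with rfl | hli
        · have hsplit : φ l = p + (orthogonalProjection (sp φ V) (φ l) :
              EuclideanSpace ℝ (Fin n)) := by rw [hpdef, pVec]; abel
          rw [hsplit, inner_add_right,
            hmain _ (SetLike.coe_mem (orthogonalProjection (sp φ V) (φ l))), add_zero]
          rw [inner_sub_left, inner_smul_left, real_inner_self_eq_norm_sq]
          simp only [conj_trivial, hlam]
          rw [div_mul_cancel₀ _ (pow_ne_zero 2 hnp), real_inner_comm p q, sub_self]
        · have hlV : l ∈ V := by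
            rw [hV, Finset.erase_right_comm]
            exact Finset.mem_erase.2 ⟨hli, hlAj⟩
          exact hmain _ (mem_sp φ hlV)
      | zero => simp
      | add w₁ w₂ _ _ h1 h2 => rw [inner_add_right, h1, h2, add_zero]
      | smul a w _ h1 => rw [inner_smul_right, h1, mul_zero]
  have huv : uVec φ A j = φ j - (orthogonalProjection (sp φ (A.erase j)) (φ j) :
      EuclideanSpace ℝ (Fin n)) := rfl
  rw [huv, hProj, hqdef, pVec]
  abel

lemma inner_uVec_le (hunit : ∀ j, ‖φ j‖ = 1) (hσ : 0 < sigmaMin φ)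
    (A : Finset (Fin m)) {i j : Fin m} (hij : i ≠ j) (hi : i ∈ A) (hj : j ∈ A) :
    |⟪uVec φ A i, uVec φ A j⟫|
      ≤ (1 - sigmaMin φ ^ 2) * (‖uVec φ A i‖ * ‖uVec φ A j‖) := by
  set V := (A.erase i).erase j with hV
  have hiV : i ∉ V := fun h => Finset.notMem_erase i A (Finset.mem_of_mem_erase h)
  have hjV : j ∉ V := Finset.notMem_erase j (A.erase i)
  set p := pVec φ V i with hpdef
  set q := pVec φ V j with hqdef
  have ha : sigmaMin φ ≤ ‖p‖ := sigma_le_norm_pVec φ V hiV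
  have hb : sigmaMin φ ≤ ‖q‖ := sigma_le_norm_pVec φ V hjV
  have ha0 : 0 < ‖p‖ := lt_of_lt_of_le hσ ha
  have hb0 : 0 < ‖q‖ := lt_of_lt_of_le hσ hb
  have hp0 : p ≠ 0 := norm_pos_iff.1 ha0
  have hq0 : q ≠ 0 := norm_pos_iff.1 hb0
  have h1 : uVec φ A j = q - (⟪p, q⟫ / ‖p‖ ^ 2) • p := uVec_eq φ A hij hi hj hp0
  have h2 : uVec φ A i = p - (⟪p, q⟫ / ‖q‖ ^ 2) • q := by
    have hVV : (A.erase j).erase i = V := by rw [hV]; exact Finset.erase_right_comm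
    have h := uVec_eq φ A hij.symm hj hi (by rw [hVV]; exact hq0)
    rw [hVV] at h
    rw [h, real_inner_comm q p]
  have hcs : ⟪p, q⟫ ^ 2 ≤ ‖p‖ ^ 2 * ‖q‖ ^ 2 := by
    have h := abs_real_inner_le_norm p q
    nlinarith [abs_nonneg (⟪p, q⟫ : ℝ), sq_abs (⟪p, q⟫ : ℝ)]
  have hD : (0:ℝ) ≤ ‖p‖ ^ 2 * ‖q‖ ^ 2 - ⟪p, q⟫ ^ 2 := by linarith
  have hNi : ‖uVec φ A i‖ ^ 2 * ‖q‖ ^ 2 = ‖p‖ ^ 2 * ‖q‖ ^ 2 - ⟪p, q⟫ ^ 2 := by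
    rw [← real_inner_self_eq_norm_sq (uVec φ A i), h2]
    simp only [inner_sub_left, inner_sub_right, inner_smul_left, inner_smul_right, conj_trivial,
      real_inner_self_eq_norm_sq]
    rw [real_inner_comm q p]
    field_simp
    ring
  have hNj : ‖uVec φ A j‖ ^ 2 * ‖p‖ ^ 2 = ‖p‖ ^ 2 * ‖q‖ ^ 2 - ⟪p, q⟫ ^ 2 := by
    rw [← real_inner_self_eq_norm_sq (uVec φ A j), h1]
    simp only [inner_sub_left, inner_sub_right, inner_smul_left, inner_smul_right, conj_trivial,
      real_inner_self_eq_norm_sq]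
    rw [real_inner_comm q p]
    field_simp
    ring
  have hIn : ⟪uVec φ A i, uVec φ A j⟫ * (‖p‖ ^ 2 * ‖q‖ ^ 2)
      = -⟪p, q⟫ * (‖p‖ ^ 2 * ‖q‖ ^ 2 - ⟪p, q⟫ ^ 2) := by
    rw [h1, h2]
    simp only [inner_sub_left, inner_sub_right, inner_smul_left, inner_smul_right, conj_trivial,
      real_inner_self_eq_norm_sq]
    rw [real_inner_comm q p]
    field_simp [ha0.ne', hb0.ne']
    ring
  have habs : |⟪uVec φ A i, uVec φ A j⟫| * (‖p‖ ^ 2 * ‖q‖ ^ 2)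
      = |⟪p, q⟫| * (‖p‖ ^ 2 * ‖q‖ ^ 2 - ⟪p, q⟫ ^ 2) := by
    have h := congrArg abs hIn
    simp only [abs_mul, abs_neg, abs_pow, abs_norm] at h
    rw [abs_of_nonneg hD] at h
    exact h
  have hNiNj : ‖uVec φ A i‖ * ‖uVec φ A j‖ * (‖p‖ * ‖q‖)
      = ‖p‖ ^ 2 * ‖q‖ ^ 2 - ⟪p, q⟫ ^ 2 := by
    have hsq : (‖uVec φ A i‖ * ‖uVec φ A j‖ * (‖p‖ * ‖q‖)) ^ 2
        = (‖p‖ ^ 2 * ‖q‖ ^ 2 - ⟪p, q⟫ ^ 2) ^ 2 := by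
      have hh : (‖uVec φ A i‖ * ‖uVec φ A j‖ * (‖p‖ * ‖q‖)) ^ 2
          = (‖uVec φ A i‖ ^ 2 * ‖q‖ ^ 2) * (‖uVec φ A j‖ ^ 2 * ‖p‖ ^ 2) := by ring
      rw [hh, hNi, hNj]; ring
    have h1' : (0:ℝ) ≤ ‖uVec φ A i‖ * ‖uVec φ A j‖ * (‖p‖ * ‖q‖) := by positivity
    nlinarith [hsq, h1', hD]
  have h6a : |⟪p, q⟫| ≤ (1 - sigmaMin φ ^ 2) * (‖p‖ * ‖q‖) :=
    inner_pVec_le φ hunit hσ V hij hiV hjV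
  have hfinal : |⟪uVec φ A i, uVec φ A j⟫| * (‖p‖ ^ 2 * ‖q‖ ^ 2)
      ≤ ((1 - sigmaMin φ ^ 2) * (‖uVec φ A i‖ * ‖uVec φ A j‖)) * (‖p‖ ^ 2 * ‖q‖ ^ 2) := by
    calc |⟪uVec φ A i, uVec φ A j⟫| * (‖p‖ ^ 2 * ‖q‖ ^ 2)
        = |⟪p, q⟫| * (‖p‖ ^ 2 * ‖q‖ ^ 2 - ⟪p, q⟫ ^ 2) := habs
      _ ≤ ((1 - sigmaMin φ ^ 2) * (‖p‖ * ‖q‖)) * (‖p‖ ^ 2 * ‖q‖ ^ 2 - ⟪p, q⟫ ^ 2) :=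
          mul_le_mul_of_nonneg_right h6a hD
      _ = ((1 - sigmaMin φ ^ 2) * (‖uVec φ A i‖ * ‖uVec φ A j‖)) * (‖p‖ ^ 2 * ‖q‖ ^ 2) := by
          rw [← hNiNj]; ring
  exact le_of_mul_le_mul_right hfinal (by positivity)

lemma norm_uhat {A : Finset (Fin m)} {i : Fin m} (hu : uVec φ A i ≠ 0) :
    ‖uhat φ A i‖ = 1 := norm_smul_inv_norm hu

lemma inner_phi_uhat (A : Finset (Fin m)) (i : Fin m) :
    ⟪φ i, uhat φ A i⟫ = ‖uVec φ A i‖ := by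
  have hsplit : φ i = uVec φ A i + (orthogonalProjection (sp φ (A.erase i)) (φ i) :
      EuclideanSpace ℝ (Fin n)) := by rw [uVec]; abel
  rw [hsplit, inner_add_left]
  have h0 : ⟪(orthogonalProjection (sp φ (A.erase i)) (φ i) : EuclideanSpace ℝ (Fin n)),
      uhat φ A i⟫ = 0 := by
    rw [real_inner_comm]; exact uhat_orth φ A i _ (SetLike.coe_mem _)
  rw [h0, add_zero, uhat, inner_smul_right, real_inner_self_eq_norm_sq]
  rcases eq_or_ne (uVec φ A i) 0 with h0 | h0
  · simp [h0]
  · have : ‖uVec φ A i‖ ≠ 0 := fun h => h0 (norm_eq_zero.1 h)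
    field_simp

lemma inner_comb_uhat (A : Finset (Fin m)) (j : Fin m) (x : Fin m → ℝ)
    (hx : ∀ l, x l ≠ 0 → l ∈ A.erase j) :
    ⟪∑ l, x l • φ l, uhat φ A j⟫ = 0 := by
  rw [sum_inner]
  apply Finset.sum_eq_zero
  intro l _
  rcases eq_or_ne (x l) 0 with h0 | h0
  · rw [h0]; simp
  · rw [real_inner_smul_left, real_inner_comm, uhat_orth φ A j _ (mem_sp φ (hx l h0)), mul_zero]

lemma inner_comb_uhat_self (A : Finset (Fin m)) (i : Fin m) (x : Fin m → ℝ)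
    (hx : ∀ l, l ≠ i → x l ≠ 0 → l ∈ A.erase i) :
    ⟪∑ l, x l • φ l, uhat φ A i⟫ = x i * ‖uVec φ A i‖ := by
  rw [sum_inner, Finset.sum_eq_single i]
  · rw [real_inner_smul_left, inner_phi_uhat]
  · intro l _ hli
    rcases eq_or_ne (x l) 0 with h0 | h0
    · rw [h0]; simp
    · rw [real_inner_smul_left, real_inner_comm,
        uhat_orth φ A i _ (mem_sp φ (hx l hli h0)), mul_zero]
  · simp

/-- the crucial strict comparison of residuals. -/
lemma key_lt (hunit : ∀ j, ‖φ j‖ = 1) (hσ : 0 < sigmaMin φ)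
    (x : Fin m → ℝ) (S : Finset (Fin m)) (hSne : S.Nonempty)
    (hsupp : ∀ l, x l ≠ 0 ↔ l ∈ S)
    (ε y : EuclideanSpace ℝ (Fin n)) (hy : y = (∑ l, x l • φ l) + ε)
    (hkeysq : 2 * (2 - sigmaMin φ ^ 2) * ‖ε‖ ^ 2
      < sigmaMin φ ^ 2 * (S.inf' hSne fun l => |x l|) ^ 2)
    (A : Finset (Fin m)) (hSA : S ⊆ A) {i j : Fin m}
    (hiS : i ∈ S) (hjA : j ∈ A) (hjS : j ∉ S) :
    ‖lsResidual φ y (A.erase j)‖ < ‖lsResidual φ y (A.erase i)‖ := by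
  set σ := sigmaMin φ with hσdef
  set e := ‖ε‖ with hedef
  set α := S.inf' hSne fun l => |x l| with hαdef
  have hiA : i ∈ A := hSA hiS
  have hij : i ≠ j := fun h => hjS (h ▸ hiS)
  have hNi : σ ≤ ‖uVec φ A i‖ := sigma_le_norm_uVec φ A i
  have hNj : σ ≤ ‖uVec φ A j‖ := sigma_le_norm_uVec φ A j
  have hNi0 : (0:ℝ) < ‖uVec φ A i‖ := lt_of_lt_of_le hσ hNi
  have hNj0 : (0:ℝ) < ‖uVec φ A j‖ := lt_of_lt_of_le hσ hNj
  have hui0 : uVec φ A i ≠ 0 := norm_pos_iff.1 hNi0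
  have huj0 : uVec φ A j ≠ 0 := norm_pos_iff.1 hNj0
  set a : ℝ := ⟪ε, uhat φ A i⟫ with hadef
  set b : ℝ := ⟪ε, uhat φ A j⟫ with hbdef
  set ρ : ℝ := ⟪uhat φ A i, uhat φ A j⟫ with hρdef
  set D : ℝ := x i * ‖uVec φ A i‖ with hDdef
  -- inner products with y
  have hyj : ⟪y, uhat φ A j⟫ = b := by
    rw [hy, inner_add_left, ← hbdef, inner_comb_uhat φ A j x
      (fun l hl => Finset.mem_erase.2 ⟨fun h => hjS (h ▸ (hsupp l).1 hl), hSA ((hsupp l).1 hl)⟩),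
      zero_add]
  have hyi : ⟪y, uhat φ A i⟫ = D + a := by
    rw [hy, inner_add_left, ← hadef, inner_comb_uhat_self φ A i x
      (fun l hli hl => Finset.mem_erase.2 ⟨hli, hSA ((hsupp l).1 hl)⟩), ← hDdef]
  -- bound on the inner product of the two unit gap vectors
  have hρle : |ρ| ≤ 1 - σ ^ 2 := by
    have hinner := inner_uVec_le φ hunit hσ A hij hiA hjA
    have hρeq : ρ = (‖uVec φ A i‖⁻¹ * ‖uVec φ A j‖⁻¹) * ⟪uVec φ A i, uVec φ A j⟫ := by
      rw [hρdef, uhat, uhat, inner_smul_left, inner_smul_right, conj_trivial]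
      ring
    rw [hρeq, abs_mul, abs_of_nonneg (by positivity : (0:ℝ) ≤ ‖uVec φ A i‖⁻¹ * ‖uVec φ A j‖⁻¹)]
    calc ‖uVec φ A i‖⁻¹ * ‖uVec φ A j‖⁻¹ * |⟪uVec φ A i, uVec φ A j⟫|
        ≤ ‖uVec φ A i‖⁻¹ * ‖uVec φ A j‖⁻¹ * ((1 - σ ^ 2) * (‖uVec φ A i‖ * ‖uVec φ A j‖)) :=
          mul_le_mul_of_nonneg_left hinner (by positivity)
      _ = 1 - σ ^ 2 := by field_simp
  have hρ0 : 0 ≤ |ρ| := abs_nonneg ρ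
  have he0 : 0 ≤ e := norm_nonneg ε
  -- the coupling bound a² + b² ≤ (1+|ρ|)e²
  have h7 : a ^ 2 + b ^ 2 ≤ (1 + |ρ|) * e ^ 2 := by
    set T : ℝ := a ^ 2 + b ^ 2 with hT
    have hT0 : 0 ≤ T := by positivity
    set w : EuclideanSpace ℝ (Fin n) := a • uhat φ A i + b • uhat φ A j with hw
    have hTinner : ⟪ε, w⟫ = T := by
      rw [hw, inner_add_right, real_inner_smul_right, real_inner_smul_right,
        ← hadef, ← hbdef, hT]
      ring
    have hwnorm : ‖w‖ ^ 2 = T + 2 * a * b * ρ := by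
      rw [hw, norm_add_sq_real, inner_smul_left, inner_smul_right, conj_trivial,
        norm_smul, norm_smul, mul_pow, mul_pow, Real.norm_eq_abs, Real.norm_eq_abs,
        sq_abs, sq_abs, norm_uhat φ hui0, norm_uhat φ huj0, ← hρdef, hT]
      ring
    have hCS : ⟪ε, w⟫ ^ 2 ≤ e ^ 2 * ‖w‖ ^ 2 := by
      have h := abs_real_inner_le_norm ε w
      nlinarith [abs_nonneg (⟪ε, w⟫ : ℝ), sq_abs (⟪ε, w⟫ : ℝ), norm_nonneg w]
    rw [hTinner, hwnorm] at hCS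
    have hcross : 2 * a * b * ρ ≤ T * |ρ| := by
      have h1 : 2 * a * b * ρ ≤ |2 * a * b * ρ| := le_abs_self _
      have h2 : |2 * a * b * ρ| = 2 * |a| * |b| * |ρ| := by
        rw [abs_mul, abs_mul, abs_mul]; norm_num
      nlinarith [sq_nonneg (|a| - |b|), abs_nonneg a, abs_nonneg b, sq_abs a, sq_abs b, hρ0]
    have hTsq : T ^ 2 ≤ e ^ 2 * (T * (1 + |ρ|)) := by nlinarith [sq_nonneg e]
    rcases eq_or_lt_of_le hT0 with hT0' | hT0'
    · rw [← hT0']; positivity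
    · nlinarith [hTsq, hT0']
  -- key strict inequality
  have hD2 : 2 * ((1 + |ρ|) * e ^ 2) < D ^ 2 := by
    have hαi : α ≤ |x i| := Finset.inf'_le _ hiS
    have hα0 : 0 ≤ α := le_inf' hSne _ fun l _ => abs_nonneg (x l)
    have hD2' : σ ^ 2 * α ^ 2 ≤ D ^ 2 := by
      have hDsq : D ^ 2 = (x i) ^ 2 * ‖uVec φ A i‖ ^ 2 := by rw [hDdef]; ring
      have h1 : σ * α ≤ ‖uVec φ A i‖ * |x i| := mul_le_mul hNi hαi hα0 (norm_nonneg _)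
      nlinarith [h1, mul_nonneg hσ.le hα0, sq_abs (x i), hDsq]
    nlinarith [hρle, sq_nonneg e]
  have hsqlt : ⟪y, uhat φ A j⟫ ^ 2 < ⟪y, uhat φ A i⟫ ^ 2 := by
    rw [hyj, hyi]
    nlinarith [h7, hD2, sq_nonneg (a + D / 2)]
  have hri := residual_sq_erase φ y A hiA hui0
  have hrj := residual_sq_erase φ y A hjA huj0
  have hsq : ‖lsResidual φ y (A.erase j)‖ ^ 2 < ‖lsResidual φ y (A.erase i)‖ ^ 2 := by
    rw [hri, hrj]; linarith
  exact lt_of_pow_lt_pow_left₀ 2 (norm_nonneg _) hsq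

end BRaux

/-- Theorem 4 of the paper: if `Φ` has full column rank, unit-norm columns,
and `(σ_min(Φ)/√(2(2−σ_min(Φ)²))) min_{i∈S}|x_i| > ‖ε‖₂`, Backward Regression started from
the full active set recovers the support `S` in `m − k` iterations, for every
tie-breaking. -/
theorem backward_regression_recovery {n m k : ℕ}
    (φ : Fin m → EuclideanSpace ℝ (Fin n)) (hrank : LinearIndependent ℝ φ)
    (hunit : ∀ j, ‖φ j‖ = 1)
    (x : Fin m → ℝ) (S : Finset (Fin m)) (hsupp : ∀ i, x i ≠ 0 ↔ i ∈ S)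
    (hcard : S.card = k) (hSne : S.Nonempty)
    (ε : EuclideanSpace ℝ (Fin n)) (y : EuclideanSpace ℝ (Fin n))
    (hy : y = (∑ j, x j • φ j) + ε)
    (hnoise : sigmaMin φ / Real.sqrt (2 * (2 - sigmaMin φ ^ 2)) *
        (S.inf' hSne fun i => |x i|) > ‖ε‖) :
    ∀ A : ℕ → Finset (Fin m), A 0 = Finset.univ →
      (∀ t < m - k, BRStep φ y (A t) (A (t+1))) → A (m - k) = S := by
  classical
  intro A hA0 hstep
  have hσ0 : 0 ≤ sigmaMin φ := BRaux.sigmaMin_nonneg φ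
  have hσ1 : sigmaMin φ ≤ 1 := BRaux.sigmaMin_le_one φ hunit hSne.choose
  have h2σ : (0:ℝ) < 2 * (2 - sigmaMin φ ^ 2) := by nlinarith
  have hsq : 0 < Real.sqrt (2 * (2 - sigmaMin φ ^ 2)) := Real.sqrt_pos.2 h2σ
  have hα0 : 0 ≤ S.inf' hSne fun l => |x l| :=
    Finset.le_inf' hSne _ fun l _ => abs_nonneg (x l)
  have hσpos : 0 < sigmaMin φ := by
    rcases eq_or_lt_of_le hσ0 with h | h
    · exfalso
      rw [← h, zero_div, zero_mul] at hnoise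
      exact absurd hnoise (not_lt.2 (norm_nonneg ε))
    · exact h
  have hkey2 : ‖ε‖ * Real.sqrt (2 * (2 - sigmaMin φ ^ 2))
      < sigmaMin φ * (S.inf' hSne fun l => |x l|) := by
    have h := mul_lt_mul_of_pos_right hnoise hsq
    have hRHS : (sigmaMin φ / Real.sqrt (2 * (2 - sigmaMin φ ^ 2))
        * (S.inf' hSne fun l => |x l|)) * Real.sqrt (2 * (2 - sigmaMin φ ^ 2))
        = sigmaMin φ * (S.inf' hSne fun l => |x l|) := by
      field_simp
    rwa [hRHS] at h
  have hkeysq : 2 * (2 - sigmaMin φ ^ 2) * ‖ε‖ ^ 2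
      < sigmaMin φ ^ 2 * (S.inf' hSne fun l => |x l|) ^ 2 := by
    have h1 : 0 ≤ ‖ε‖ * Real.sqrt (2 * (2 - sigmaMin φ ^ 2)) := by positivity
    have h2 := mul_self_lt_mul_self h1 hkey2
    have h3 := Real.sq_sqrt h2σ.le
    nlinarith [h2, h3]
  have hkm : k ≤ m := by
    have h := Finset.card_le_card (Finset.subset_univ S)
    rwa [hcard, Finset.card_univ, Fintype.card_fin] at h
  have hinv : ∀ t, t ≤ m - k → S ⊆ A t ∧ (A t).card = m - t := by
    intro t
    induction t with
    | zero =>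
      intro _
      rw [hA0]
      exact ⟨Finset.subset_univ S, by simp⟩
    | succ t ih =>
      intro ht
      have ht' : t < m - k := Nat.lt_of_lt_of_le (Nat.lt_succ_self t) ht
      obtain ⟨hSA, hcardA⟩ := ih ht'.le
      obtain ⟨i, hiA, hBeq, hmin⟩ := hstep t ht'
      have hcardlt : S.card < (A t).card := by rw [hcardA, hcard]; omega
      obtain ⟨j, hjA, hjS⟩ : ∃ j ∈ A t, j ∉ S := by
        by_contra h
        push_neg at h
        have hsub : A t ⊆ S := fun l hl => h l hl
        exact absurd (Finset.card_le_card hsub) (not_le.2 hcardlt)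
      have hiS : i ∉ S := by
        intro hiSmem
        have hlt := BRaux.key_lt φ hunit hσpos x S hSne hsupp ε y hy hkeysq (A t)
          hSA hiSmem hjA hjS
        exact absurd (hmin j hjA) (not_le.2 hlt)
      refine ⟨?_, ?_⟩
      · rw [hBeq]
        intro s hs
        exact Finset.mem_erase.2 ⟨fun h => hiS (h ▸ hs), hSA hs⟩
      · rw [hBeq, Finset.card_erase_of_mem hiA, hcardA]
        omega
  obtain ⟨hfinS, hfincard⟩ := hinv (m - k) le_rfl
  refine (Finset.eq_of_subset_of_card_le hfinS ?_).symm
  rw [hfincard, hcard]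
  omega
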